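/- Let S_1 be the set of positive integers n for which there exists a positive integer x with n(n − 1) = 2x(x − 1), and let S_2 be the set of perfect squares. Then for every positive integer m not belonging to S_1 ∩ S_2, there are infinitely many positive integers n for which there exists a balanced weighting f: E(K_n) → {-1, 1} such that no m-element vertex subset has edge weights summing to 0. -/
import Mathlib

open Finset

lemma two_mul_sum_pairs {ι : Type*} [DecidableEq ι] (g : ι → ℤ) (S : Finset ι) :
    2 * ∑ e ∈ S.powersetCard 2, ∏ i ∈ e, g i
      = (∑ i ∈ S, g i)^2 - ∑ i ∈ S, (g i)^2 := by
  induction S using Finset.cons_induction with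
  | empty =>
    rw [Finset.powersetCard_eq_empty.mpr (by simp)]; simp
  | cons x s hx ih =>
    rw [Finset.cons_eq_insert, Finset.powersetCard_succ_insert hx 1,
      Finset.sum_union, Finset.sum_image, Finset.powersetCard_one, Finset.sum_map]
    · simp only [Function.Embedding.coeFn_mk]
      have key : ∀ i ∈ s, ∏ j ∈ insert x {i}, g j = g x * g i := by
        intro i hi
        rw [Finset.prod_insert (by simp; rintro rfl; exact hx hi), Finset.prod_singleton]
      rw [Finset.sum_congr rfl key, ← Finset.mul_sum,
        Finset.sum_insert hx, Finset.sum_insert hx]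
      ring_nf
      linarith [ih]
    · intro e he e' he' hee
      have hxe : x ∉ e := fun hc => hx ((Finset.mem_powersetCard.mp he).1 hc)
      have hxe' : x ∉ e' := fun hc => hx ((Finset.mem_powersetCard.mp he').1 hc)
      have := congrArg (Finset.erase · x) hee
      simpa [Finset.erase_insert_of_ne, Finset.erase_insert, hxe, hxe'] using this
    · rw [Finset.disjoint_right]
      intro e he hec
      obtain ⟨e', he', rfl⟩ := Finset.mem_image.mp he
      exact hx ((Finset.mem_powersetCard.mp hec).1 (Finset.mem_insert_self x e'))

lemma card_filter_fin_lt (n q : ℕ) (h : q ≤ n) :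
    ((Finset.univ : Finset (Fin n)).filter (fun i => i.val < q)).card = q := by
  have : (Finset.univ.filter (fun i : Fin n => i.val < q)) =
      (Finset.range q).attachFin (fun m hm => lt_of_lt_of_le (Finset.mem_range.mp hm) h) := by
    ext i; simp [Finset.mem_attachFin]
  rw [this, Finset.card_attachFin, Finset.card_range]

lemma prod_pm {ι : Type*} (g : ι → ℤ) (s : Finset ι) (h : ∀ i ∈ s, g i = -1 ∨ g i = 1) :
    (∏ i ∈ s, g i) = -1 ∨ (∏ i ∈ s, g i) = 1 := by
  induction s using Finset.cons_induction with
  | empty => simp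
  | cons x t hx ih =>
    rw [Finset.prod_cons]
    rcases h x (Finset.mem_cons_self x t) with h1 | h1 <;>
      rcases ih (fun i hi => h i (Finset.mem_cons.mpr (Or.inr hi))) with h2 | h2 <;>
      simp [h1, h2]

lemma prod_01 {ι : Type*} (g : ι → ℤ) (s : Finset ι) (h : ∀ i ∈ s, g i = 0 ∨ g i = 1) :
    (∏ i ∈ s, g i) = 0 ∨ (∏ i ∈ s, g i) = 1 := by
  induction s using Finset.cons_induction with
  | empty => simp
  | cons x t hx ih =>
    rw [Finset.prod_cons]
    rcases h x (Finset.mem_cons_self x t) with h1 | h1 <;>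
      rcases ih (fun i hi => h i (Finset.mem_cons.mpr (Or.inr hi))) with h2 | h2 <;>
      simp [h1, h2]

lemma balance_of_sum_zero {n : ℕ} (f : Finset (Fin n) → ℤ)
    (h1 : ∀ e ∈ Finset.powersetCard 2 (Finset.univ : Finset (Fin n)), f e = -1 ∨ f e = 1)
    (h0 : ∑ e ∈ Finset.powersetCard 2 (Finset.univ : Finset (Fin n)), f e = 0) :
    ((Finset.powersetCard 2 (Finset.univ : Finset (Fin n))).filter (fun e => f e = -1)).card =
    ((Finset.powersetCard 2 (Finset.univ : Finset (Fin n))).filter (fun e => f e = 1)).card := by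
  set E := Finset.powersetCard 2 (Finset.univ : Finset (Fin n)) with hE
  have hsplit : ∑ e ∈ E.filter (fun e => f e = 1), f e
      + ∑ e ∈ E.filter (fun e => ¬ (f e = 1)), f e = ∑ e ∈ E, f e :=
    Finset.sum_filter_add_sum_filter_not E _ f
  have hfneg : E.filter (fun e => ¬ (f e = 1)) = E.filter (fun e => f e = -1) := by
    ext e
    simp only [Finset.mem_filter]
    constructor
    · rintro ⟨he, hne⟩
      exact ⟨he, (h1 e he).resolve_right hne⟩
    · rintro ⟨he, hne⟩
      exact ⟨he, by rw [hne]; norm_num⟩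
  have hpos : ∑ e ∈ E.filter (fun e => f e = 1), f e
      = ((E.filter (fun e => f e = 1)).card : ℤ) := by
    rw [Finset.sum_congr rfl (fun e he => (Finset.mem_filter.mp he).2), Finset.sum_const,
      nsmul_eq_mul, mul_one]
  have hneg : ∑ e ∈ E.filter (fun e => f e = -1), f e
      = -((E.filter (fun e => f e = -1)).card : ℤ) := by
    rw [Finset.sum_congr rfl (fun e he => (Finset.mem_filter.mp he).2), Finset.sum_const,
      nsmul_eq_mul, mul_neg_one]
  rw [hfneg, hpos, hneg, h0] at hsplit
  omega

lemma two_mul_choose_two (n : ℕ) : 2 * n.choose 2 = n * (n - 1) := by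
  rw [Nat.choose_two_right]
  have h : 2 ∣ n * (n - 1) := by
    rcases Nat.even_or_odd n with h | h
    · exact Dvd.dvd.mul_right h.two_dvd _
    · rcases n with _ | k
      · simp
      · simp only [Nat.succ_sub_one]
        exact Dvd.dvd.mul_left (Nat.Odd.sub_odd h odd_one).two_dvd _
  omega

/-- Pell-type sequence: pairs (n, x) with n(n-1) = 2x(x-1). -/
def pellSeq : ℕ → ℕ × ℕ
  | 0 => (4, 3)
  | k + 1 =>
    let p := pellSeq k
    (3 * p.1 + 4 * p.2 - 3, 2 * p.1 + 3 * p.2 - 2)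

lemma pellSeq_spec (k : ℕ) : 4 ≤ (pellSeq k).1 ∧ 3 ≤ (pellSeq k).2 ∧
    (pellSeq k).2 < (pellSeq k).1 ∧
    (pellSeq k).1 * ((pellSeq k).1 - 1) = 2 * ((pellSeq k).2 * ((pellSeq k).2 - 1)) := by
  induction k with
  | zero => norm_num [pellSeq]
  | succ k ih =>
    obtain ⟨hA, hB, hBA, hinv⟩ := ih
    set A := (pellSeq k).1
    set B := (pellSeq k).2
    have h1 : (pellSeq (k + 1)).1 = 3 * A + 4 * B - 3 := rfl
    have h2 : (pellSeq (k + 1)).2 = 2 * A + 3 * B - 2 := rfl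
    refine ⟨by omega, by omega, by omega, ?_⟩
    rw [h1, h2]
    have hinvz : (A : ℤ) * ((A : ℤ) - 1) = 2 * ((B : ℤ) * ((B : ℤ) - 1)) := by
      have := hinv
      zify [show 1 ≤ A by omega, show 1 ≤ B by omega] at this
      linarith [this]
    zify [show 3 ≤ 3 * A + 4 * B by omega, show 2 ≤ 2 * A + 3 * B by omega,
      show 1 ≤ 3 * A + 4 * B - 3 by omega, show 1 ≤ 2 * A + 3 * B - 2 by omega,
      show 3 ≤ 3 * A + 4 * B by omega]
    linear_combination hinvz

lemma pellSeq_strictMono : StrictMono (fun k => (pellSeq k).1) := by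
  apply strictMono_nat_of_lt_succ
  intro k
  obtain ⟨hA, hB, _, _⟩ := pellSeq_spec k
  show (pellSeq k).1 < 3 * (pellSeq k).1 + 4 * (pellSeq k).2 - 3
  omega

set_option maxHeartbeats 1000000 in
/-- For every positive integer `m` not in `S₁ ∩ S₂`, where
`S₁ = {n : ∃ x > 0, n(n-1) = 2x(x-1)}` and `S₂` is the set of perfect squares, there are
infinitely many positive integers `n` admitting a balanced weighting
`f : E(K_n) → {-1,1}` with no zero-sum copy of `K_m`. -/
theorem balanced_zero_sum_Km_free_exists (m : ℕ) (hm : 0 < m)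
    (hmS : m ∉ ({n : ℕ | 0 < n ∧ ∃ x : ℕ, 0 < x ∧ n * (n - 1) = 2 * (x * (x - 1))} ∩
      {n : ℕ | ∃ k : ℕ, 0 < k ∧ n = k ^ 2})) :
    {n : ℕ | 0 < n ∧ ∃ f : Finset (Fin n) → ℤ,
      (∀ e ∈ Finset.powersetCard 2 (Finset.univ : Finset (Fin n)), f e = -1 ∨ f e = 1) ∧
      (((Finset.powersetCard 2 (Finset.univ : Finset (Fin n))).filter
          (fun e => f e = -1)).card =
        ((Finset.powersetCard 2 (Finset.univ : Finset (Fin n))).filter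
          (fun e => f e = 1)).card) ∧
      (∀ S ∈ Finset.powersetCard m (Finset.univ : Finset (Fin n)),
        (∑ e ∈ Finset.powersetCard 2 S, f e) ≠ 0)}.Infinite := by
  by_cases hsq : ∃ k : ℕ, 0 < k ∧ m = k ^ 2
  · -- m is a perfect square, hence m ∉ S₁
    have hnS1 : ¬ ∃ x : ℕ, 0 < x ∧ m * (m - 1) = 2 * (x * (x - 1)) :=
      fun h => hmS ⟨⟨hm, h⟩, hsq⟩
    have hm2 : 2 ≤ m := by
      rcases Nat.lt_or_ge m 2 with h | h
      · have hm1 : m = 1 := by omega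
        subst hm1
        exact absurd ⟨1, one_pos, by norm_num⟩ hnS1
      · exact h
    apply Set.infinite_of_injective_forall_mem
      (f := fun k : ℕ => (pellSeq k).1) pellSeq_strictMono.injective
    intro k
    obtain ⟨hA, hB, hBA, hinv⟩ := pellSeq_spec k
    set n := (pellSeq k).1 with hn
    set p := (pellSeq k).2 with hp
    set c : Fin n → ℤ := fun i => if i.val < p then (1:ℤ) else 0 with hc
    have hc01 : ∀ i, c i = 0 ∨ c i = 1 := by
      intro i; by_cases h : i.val < p <;> simp [hc, h]
    have hcsq : ∀ i, (c i)^2 = c i := by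
      intro i; rcases hc01 i with h | h <;> rw [h] <;> norm_num
    have hfpm : ∀ e : Finset (Fin n), (1 - 2 * ∏ i ∈ e, c i = -1) ∨
        (1 - 2 * ∏ i ∈ e, c i = 1) := by
      intro e
      rcases prod_01 c e (fun i _ => hc01 i) with h | h
      · right; rw [h]; ring
      · left; rw [h]; ring
    have hchoosen : 2 * (n.choose 2 : ℤ) = (n : ℤ) * ((n : ℤ) - 1) := by
      have := two_mul_choose_two n
      zify [show 1 ≤ n by omega] at this
      linarith
    refine ⟨by omega, fun e => 1 - 2 * ∏ i ∈ e, c i, fun e _ => hfpm e, ?_, ?_⟩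
    · apply balance_of_sum_zero
      · exact fun e _ => hfpm e
      · show ∑ e ∈ Finset.powersetCard 2 (Finset.univ : Finset (Fin n)),
          (1 - 2 * ∏ i ∈ e, c i) = 0
        rw [Finset.sum_sub_distrib, Finset.sum_const, nsmul_eq_mul, mul_one, ← Finset.mul_sum]
        have hcard : (Finset.powersetCard 2 (Finset.univ : Finset (Fin n))).card = n.choose 2 := by
          rw [Finset.card_powersetCard, Finset.card_univ, Fintype.card_fin]
        have hpair := two_mul_sum_pairs c (Finset.univ : Finset (Fin n))
        have hsum1 : ∑ i : Fin n, c i = (p : ℤ) := by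
          rw [hc, Finset.sum_ite, Finset.sum_const, Finset.sum_const,
            card_filter_fin_lt n p (by omega)]
          simp
        have hsum2 : ∑ i : Fin n, (c i)^2 = (p : ℤ) := by
          rw [Finset.sum_congr rfl (fun i _ => hcsq i), hsum1]
        rw [hsum1, hsum2] at hpair
        have hinvz : (n : ℤ) * ((n : ℤ) - 1) = 2 * ((p : ℤ) * ((p : ℤ) - 1)) := by
          have := hinv
          zify [show 1 ≤ n by omega, show 1 ≤ p by omega] at this
          linarith
        rw [hcard]
        nlinarith [hpair, hchoosen, hinvz]
    · intro S hS hzero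
      have hzero' : ∑ e ∈ Finset.powersetCard 2 S, (1 - 2 * ∏ i ∈ e, c i) = 0 := hzero
      have hScard : S.card = m := (Finset.mem_powersetCard.mp hS).2
      set a := (S.filter (fun i => i.val < p)).card with ha
      have hsum1 : ∑ i ∈ S, c i = (a : ℤ) := by
        rw [hc, Finset.sum_ite, Finset.sum_const, Finset.sum_const]
        simp [ha]
      have hsum2 : ∑ i ∈ S, (c i)^2 = (a : ℤ) := by
        rw [Finset.sum_congr rfl (fun i _ => hcsq i), hsum1]
      have hpair := two_mul_sum_pairs c S
      rw [hsum1, hsum2] at hpair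
      rw [Finset.sum_sub_distrib, Finset.sum_const, nsmul_eq_mul, mul_one,
        ← Finset.mul_sum] at hzero'
      have hcard : (Finset.powersetCard 2 S).card = m.choose 2 := by
        rw [Finset.card_powersetCard, hScard]
      rw [hcard] at hzero'
      have hchoose : 2 * (m.choose 2 : ℤ) = (m : ℤ) * ((m : ℤ) - 1) := by
        have := two_mul_choose_two m
        zify [show 1 ≤ m by omega] at this
        linarith
      have hC : (m.choose 2 : ℤ) = (a : ℤ)^2 - (a : ℤ) := by linarith [hzero', hpair]
      have hkey : (m : ℤ) * ((m : ℤ) - 1) = 2 * ((a : ℤ) * ((a : ℤ) - 1)) := by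
        linear_combination -hchoose + 2 * hC
      have ha2 : 2 ≤ a := by
        by_contra hcon
        have hz : (a : ℤ) * ((a : ℤ) - 1) = 0 := by
          interval_cases a <;> norm_num
        rw [hz] at hkey
        have hmz : (2 : ℤ) ≤ (m : ℤ) := by exact_mod_cast hm2
        nlinarith
      apply hnS1
      refine ⟨a, by omega, ?_⟩
      have hcast : ((m * (m - 1) : ℕ) : ℤ) = ((2 * (a * (a - 1)) : ℕ) : ℤ) := by
        push_cast [Nat.cast_sub (show 1 ≤ m by omega), Nat.cast_sub (show 1 ≤ a by omega)]
        linarith [hkey]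
      exact_mod_cast hcast
  · -- m is not a perfect square
    apply Set.infinite_of_injective_forall_mem
      (f := fun k : ℕ => (k + 1) ^ 2)
      (fun a b hab => by
        simpa using Nat.pow_left_injective (by norm_num) hab)
    intro k
    set K := k + 1 with hK
    set n := K ^ 2 with hn
    have hKpos : 0 < K := Nat.succ_pos k
    have hKn : K ≤ n := by
      rw [hn]; nlinarith
    have heven : 2 ∣ n - K := by
      obtain ⟨t, ht⟩ := Nat.even_mul_succ_self k
      have h1 : n = k * (k + 1) + (k + 1) := by rw [hn, hK]; ring
      omega
    set q := (n - K) / 2 with hq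
    have hq2 : 2 * q + K = n := by
      obtain ⟨d, hd⟩ := heven
      have h1 : n = k * (k + 1) + (k + 1) := by rw [hn, hK]; ring
      omega
    have hqn : q ≤ n := by omega
    set g : Fin n → ℤ := fun i => if i.val < q then (-1 : ℤ) else 1 with hg
    have hgpm : ∀ i : Fin n, g i = -1 ∨ g i = 1 := by
      intro i; by_cases h : i.val < q <;> simp [hg, h]
    have hgsq : ∀ i : Fin n, (g i)^2 = 1 := by
      intro i; rcases hgpm i with h | h <;> rw [h] <;> norm_num
    refine ⟨by omega, fun e => ∏ i ∈ e, g i, fun e _ => prod_pm g e (fun i _ => hgpm i),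
      ?_, ?_⟩
    · apply balance_of_sum_zero
      · exact fun e _ => prod_pm g e (fun i _ => hgpm i)
      · show ∑ e ∈ Finset.powersetCard 2 (Finset.univ : Finset (Fin n)),
          ∏ i ∈ e, g i = 0
        have hpair := two_mul_sum_pairs g (Finset.univ : Finset (Fin n))
        have hsum1 : ∑ i : Fin n, g i = (n : ℤ) - 2 * q := by
          rw [hg, Finset.sum_ite, Finset.sum_const, Finset.sum_const,
            card_filter_fin_lt n q hqn]
          have hcc : (Finset.univ.filter (fun i : Fin n => ¬ i.val < q)).card = n - q := by
            have := Finset.card_filter_add_card_filter_not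
              (s := (Finset.univ : Finset (Fin n))) (p := fun i : Fin n => i.val < q)
            rw [Finset.card_univ, Fintype.card_fin, card_filter_fin_lt n q hqn] at this
            omega
          rw [hcc, nsmul_eq_mul, nsmul_eq_mul, Nat.cast_sub hqn]
          ring
        have hsum2 : ∑ i : Fin n, (g i)^2 = (n : ℤ) := by
          rw [Finset.sum_congr rfl (fun i _ => hgsq i), Finset.sum_const, Finset.card_univ,
            Fintype.card_fin, nsmul_eq_mul, mul_one]
        rw [hsum1, hsum2] at hpair
        have hKz : (n : ℤ) - 2 * q = (K : ℤ) := by omega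
        rw [hKz] at hpair
        have hnK : (K : ℤ)^2 = (n : ℤ) := by exact_mod_cast congrArg (Nat.cast : ℕ → ℤ) hn.symm
        have h2 : 2 * ∑ e ∈ Finset.powersetCard 2 (Finset.univ : Finset (Fin n)),
            ∏ i ∈ e, g i = 0 := by rw [hpair, hnK]; ring
        linarith
    · intro S hS hzero
      have hzero' : ∑ e ∈ Finset.powersetCard 2 S, ∏ i ∈ e, g i = 0 := hzero
      have hScard : S.card = m := (Finset.mem_powersetCard.mp hS).2
      set a := (S.filter (fun i => i.val < q)).card with ha
      have hfsplit := Finset.card_filter_add_card_filter_not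
        (s := S) (p := fun i => i.val < q)
      rw [hScard] at hfsplit
      have hsum1 : ∑ i ∈ S, g i = (m : ℤ) - 2 * a := by
        rw [hg, Finset.sum_ite, Finset.sum_const, Finset.sum_const]
        have h1 : (S.filter (fun i : Fin n => ¬ i.val < q)).card = m - a := by omega
        rw [h1, ← ha]
        have ham : a ≤ m := by omega
        rw [nsmul_eq_mul, nsmul_eq_mul, Nat.cast_sub ham]
        ring
      have hsum2 : ∑ i ∈ S, (g i)^2 = (m : ℤ) := by
        rw [Finset.sum_congr rfl (fun i _ => hgsq i), Finset.sum_const, hScard, nsmul_eq_mul,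
          mul_one]
      have hpair := two_mul_sum_pairs g S
      rw [hsum1, hsum2, hzero', mul_zero] at hpair
      have hmsq : (m : ℤ) = ((m : ℤ) - 2 * a)^2 := by linarith
      set t := ((m : ℤ) - 2 * a).natAbs with ht
      have htsq : ((t : ℤ))^2 = ((m : ℤ) - 2 * a)^2 := by
        rw [ht, Int.natAbs_sq]
      have hmt : m = t ^ 2 := by
        have : (m : ℤ) = (t : ℤ)^2 := by rw [htsq]; exact hmsq
        exact_mod_cast this
      apply hsq
      refine ⟨t, ?_, hmt⟩
      rcases Nat.eq_zero_or_pos t with h | h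
      · exfalso; rw [h] at hmt; simp at hmt; omega
      · exact h
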